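/- Let B be the closed ball of radius 1 in ℝ^d centered at the origin, and let ρ > 1. For every degree bound l, there exists a constant C > 0 (depending only on d, l, ρ) such that for every polynomial q of degree at most l and every closed ball B' ⊆ B of radius at least 1/ρ, one has sup_{x ∈ B} |q(x)| ≤ C · (∫_{B'} |q|² )^{1/2}. -/

import Mathlib

open MeasureTheory Metric MvPolynomial

noncomputable section
abbrev Eucl (d : ℕ) := EuclideanSpace ℝ (Fin d)

lemma analytic_eval (d : ℕ) (p : MvPolynomial (Fin d) ℝ) :
    AnalyticOnNhd ℝ (fun x : Eucl d => eval (fun i => x i) p) Set.univ := by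
  exact AnalyticOnNhd.eval_continuousLinearMap
    ((PiLp.continuousLinearEquiv 2 ℝ (fun _ : Fin d => ℝ)).toContinuousLinearMap) p

lemma cont_eval (d : ℕ) (p : MvPolynomial (Fin d) ℝ) :
    Continuous (fun x : Eucl d => eval (fun i => x i) p) := by
  rw [← continuousOn_univ]
  exact (analytic_eval d p).continuousOn

lemma vanish_eq_zero (d : ℕ) (p : MvPolynomial (Fin d) ℝ) (c₀ : Eucl d) (r₀ : ℝ) (hr : 0 < r₀)
    (h : ∀ x ∈ ball c₀ r₀, eval (fun i => x i) p = 0) : p = 0 := by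
  have hz : Set.EqOn (fun x : Eucl d => eval (fun i => x i) p) 0 Set.univ := by
    apply (analytic_eval d p).eqOn_zero_of_preconnected_of_eventuallyEq_zero
      isPreconnected_univ (Set.mem_univ c₀)
    filter_upwards [ball_mem_nhds c₀ hr] with x hx using h x hx
  apply MvPolynomial.funext
  intro x
  have := hz (Set.mem_univ ((EuclideanSpace.equiv (Fin d) ℝ).symm x))
  simpa using this

lemma perBall (d l : ℕ) (c₀ : Eucl d) (r₀ : ℝ) (hr : 0 < r₀) :
    ∃ C > (0:ℝ), ∀ q : MvPolynomial (Fin d) ℝ, q.totalDegree ≤ l →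
      ∀ x ∈ closedBall (0 : Eucl d) 1,
        |eval (fun i => x i) q| ≤
          C * Real.sqrt (∫ y in closedBall c₀ r₀, (eval (fun i => y i) q)^2) := by
  classical
  set B₀ := closedBall c₀ r₀ with hB₀
  set V := MvPolynomial.restrictTotalDegree (Fin d) ℝ l with hV
  haveI : FiniteDimensional ℝ V := by
    have : Module.Finite ℝ V := inferInstance
    exact this
  haveI : Module.Free ℝ V := Module.Free.of_divisionRing ℝ V
  haveI : Nontrivial V := by
    refine ⟨⟨1, by simp [hV, mem_restrictTotalDegree]⟩, 0, ?_⟩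
    simp [Subtype.ext_iff]
  set n := Module.finrank ℝ V with hn
  haveI : NoZeroSMulDivisors ℝ V := inferInstance
  have hn0 : 0 < n := Module.finrank_pos
  haveI : Nonempty (Fin n) := ⟨⟨0, hn0⟩⟩
  let b : Module.Basis (Fin n) ℝ V := Module.finBasis ℝ V
  let f : Fin n → Eucl d → ℝ := fun i x => eval (fun j => x j) ((b i : V) : MvPolynomial (Fin d) ℝ)
  have hfc : ∀ i, Continuous (f i) := fun i => cont_eval d _
  let ι : (Fin n → ℝ) ≃ₗ[ℝ] V := b.equivFun.symm
  let H : (Fin n → ℝ) → Eucl d → ℝ := fun v y => ∑ i, v i * f i y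
  have hιeval : ∀ (v : Fin n → ℝ) (x : Eucl d),
      eval (fun j => x j) ((ι v : V) : MvPolynomial (Fin d) ℝ) = H v x := by
    intro v x
    have : (ι v : V) = ∑ i, v i • b i := b.equivFun_symm_apply v
    rw [this]
    push_cast [Submodule.coe_sum]
    rw [map_sum]
    refine Finset.sum_congr rfl fun i _ => ?_
    rw [MvPolynomial.smul_eval]
  have hHc : ∀ v, Continuous (H v) := by
    intro v; exact continuous_finset_sum _ fun i _ => (continuous_const.mul (hfc i))
  -- sup bound
  have hbdd : ∀ i, ∃ M : ℝ, ∀ x ∈ closedBall (0 : Eucl d) 1, |f i x| ≤ M := by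
    intro i
    obtain ⟨M, hM⟩ := (isCompact_closedBall (0 : Eucl d) 1).exists_bound_of_continuousOn
      (hfc i).continuousOn
    exact ⟨M, fun x hx => hM x hx⟩
  choose M hM using hbdd
  set A : ℝ := 1 + ∑ i, |M i| with hA
  have hApos : 0 < A := by positivity
  have hsup : ∀ v, ∀ x ∈ closedBall (0 : Eucl d) 1, |H v x| ≤ A * ‖v‖ := by
    intro v x hx
    calc |H v x| ≤ ∑ i, |v i * f i x| := Finset.abs_sum_le_sum_abs _ _
      _ ≤ ∑ i, ‖v‖ * |M i| := by
          refine Finset.sum_le_sum fun i _ => ?_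
          rw [abs_mul]
          exact mul_le_mul (norm_le_pi_norm v i) ((hM i x hx).trans (le_abs_self _))
            (abs_nonneg _) (norm_nonneg _)
      _ = (∑ i, |M i|) * ‖v‖ := by rw [← Finset.mul_sum, mul_comm]
      _ ≤ A * ‖v‖ := by
          apply mul_le_mul_of_nonneg_right _ (norm_nonneg _)
          simp [hA]
  -- integrability
  have hint : ∀ (g : Eucl d → ℝ), Continuous g → IntegrableOn g B₀ := by
    intro g hg
    exact hg.continuousOn.integrableOn_compact (isCompact_closedBall _ _)
  -- quadratic form
  set F : (Fin n → ℝ) → ℝ := fun v => ∫ y in B₀, (H v y)^2 with hF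
  have hFexp : ∀ v, F v = ∑ i, ∑ j, (v i * v j) * ∫ y in B₀, f i y * f j y := by
    intro v
    have hpt : ∀ y, (H v y)^2 = ∑ i, ∑ j, (v i * v j) * (f i y * f j y) := by
      intro y
      rw [sq, Finset.sum_mul_sum]
      exact Finset.sum_congr rfl fun i _ => Finset.sum_congr rfl fun j _ => by ring
    simp only [hF]
    calc (∫ y in B₀, (H v y)^2)
        = ∫ y in B₀, ∑ i, ∑ j, (v i * v j) * (f i y * f j y) := by
          exact integral_congr_ae (Filter.Eventually.of_forall fun y => hpt y)
      _ = ∑ i, ∫ y in B₀, ∑ j, (v i * v j) * (f i y * f j y) := by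
          refine integral_finset_sum _ fun i _ => ?_
          refine integrable_finset_sum _ fun j _ => ?_
          exact ((hint _ ((hfc i).mul (hfc j))).const_mul _)
      _ = ∑ i, ∑ j, ∫ y in B₀, (v i * v j) * (f i y * f j y) := by
          refine Finset.sum_congr rfl fun i _ => ?_
          exact integral_finset_sum _ fun j _ => ((hint _ ((hfc i).mul (hfc j))).const_mul _)
      _ = ∑ i, ∑ j, (v i * v j) * ∫ y in B₀, f i y * f j y := by
          refine Finset.sum_congr rfl fun i _ => Finset.sum_congr rfl fun j _ => ?_
          exact integral_const_mul _ _
  have hFcont : Continuous F := by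
    have : F = fun v => ∑ i, ∑ j, (v i * v j) * ∫ y in B₀, f i y * f j y := funext hFexp
    rw [this]
    refine continuous_finset_sum _ fun i _ => continuous_finset_sum _ fun j _ => ?_
    exact (((continuous_apply i).mul (continuous_apply j)).mul continuous_const)
  have hFnonneg : ∀ v, 0 ≤ F v := fun v => setIntegral_nonneg (measurableSet_closedBall)
    (fun y _ => sq_nonneg _)
  have hFpos : ∀ v, v ≠ 0 → 0 < F v := by
    intro v hv
    rcases lt_or_eq_of_le (hFnonneg v) with h | h
    · exact h
    exfalso
    apply hv
    -- F v = 0 ⇒ (H v)² = 0 a.e. on B₀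
    have hae : (fun y => (H v y)^2) =ᵐ[volume.restrict B₀] 0 := by
      rw [← integral_eq_zero_iff_of_nonneg (fun y => sq_nonneg _)
        (hint _ ((hHc v).pow 2))]
      exact h.symm
    -- the open set where H v ≠ 0 inside the open ball has measure zero, hence empty
    have hzero : ∀ y ∈ ball c₀ r₀, H v y = 0 := by
      intro y hy
      by_contra hne
      set U : Set (Eucl d) := {z | H v z ≠ 0} ∩ ball c₀ r₀ with hU
      have hUopen : IsOpen U :=
        ((isOpen_ne.preimage (hHc v)).inter isOpen_ball)
      have hUne : U.Nonempty := ⟨y, hne, hy⟩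
      have hUpos : 0 < volume U := hUopen.measure_pos volume hUne
      have hU0 : volume U = 0 := by
        have hmeas : MeasurableSet {z : Eucl d | ¬ (H v z)^2 = 0} := by
          have ho : IsOpen {z : Eucl d | (H v z)^2 ≠ 0} :=
            isOpen_ne.preimage ((hHc v).pow 2)
          exact ho.measurableSet
        have h0 : volume.restrict B₀ {z : Eucl d | ¬ (H v z)^2 = 0} = 0 := by
          have h' := hae
          rw [Filter.EventuallyEq] at h'
          simp only [Pi.zero_apply] at h'
          exact ae_iff.mp h'
        rw [Measure.restrict_apply hmeas] at h0
        refine measure_mono_null ?_ h0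
        intro z hz
        rcases hz with ⟨hz1, hz2⟩
        refine ⟨?_, ball_subset_closedBall hz2⟩
        simpa using pow_ne_zero 2 hz1
      exact absurd hU0 hUpos.ne'
    -- hence ι v = 0, so v = 0
    have hp0 : ((ι v : V) : MvPolynomial (Fin d) ℝ) = 0 := by
      apply vanish_eq_zero d _ c₀ r₀ hr
      intro x hx
      rw [hιeval]
      exact hzero x hx
    have : (ι v : V) = 0 := by
      exact_mod_cast Subtype.ext hp0
    simpa using ι.injective (by simpa using this)
  -- minimum on the unit sphere
  have hsne : (sphere (0 : Fin n → ℝ) 1).Nonempty :=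
    NormedSpace.sphere_nonempty.mpr zero_le_one
  obtain ⟨v₀, hv₀S, hv₀min⟩ :=
    (isCompact_sphere (0 : Fin n → ℝ) 1).exists_isMinOn hsne hFcont.continuousOn
  set m := F v₀ with hmdef
  have hv₀ne : v₀ ≠ 0 := by
    intro h0
    rw [mem_sphere_zero_iff_norm, h0] at hv₀S
    simpa using hv₀S
  have hm : 0 < m := hFpos v₀ hv₀ne
  have hlow : ∀ v, m * ‖v‖^2 ≤ F v := by
    intro v
    rcases eq_or_ne v 0 with rfl | hv
    · simp only [norm_zero]
      have : F 0 = 0 := by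
        simp only [hF]
        have : ∀ y : Eucl d, (H 0 y)^2 = 0 := by intro y; simp [H]
        simp [this]
      simp [this]
    · have ht : 0 < ‖v‖ := norm_pos_iff.mpr hv
      set u := ‖v‖⁻¹ • v with hu
      have huS : u ∈ sphere (0 : Fin n → ℝ) 1 := by
        rw [mem_sphere_zero_iff_norm, hu, norm_smul, norm_inv, norm_norm]
        field_simp
      have hFv : F v = ‖v‖^2 * F u := by
        have hvu : v = ‖v‖ • u := by rw [hu, smul_smul]; field_simp; rw [one_smul]
        have hHsmul : ∀ (t : ℝ) (w : Fin n → ℝ) (y : Eucl d), H (t • w) y = t * H w y := by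
          intro t w y
          simp only [H, Pi.smul_apply, smul_eq_mul, Finset.mul_sum]
          exact Finset.sum_congr rfl fun i _ => by ring
        have hH : ∀ y, H v y = ‖v‖ * H u y := by
          intro y
          conv_lhs => rw [hvu]
          exact hHsmul _ _ _
        simp only [hF]
        calc (∫ y in B₀, (H v y)^2) = ∫ y in B₀, ‖v‖^2 * (H u y)^2 := by
              refine integral_congr_ae (Filter.Eventually.of_forall fun y => ?_)
              show H v y ^ 2 = ‖v‖ ^ 2 * H u y ^ 2
              rw [hH y]; ring
          _ = ‖v‖^2 * ∫ y in B₀, (H u y)^2 := integral_const_mul _ _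
      rw [hFv, mul_comm]
      exact mul_le_mul_of_nonneg_left (hv₀min huS) (sq_nonneg _)
  -- conclusion
  refine ⟨A / Real.sqrt m, by positivity, ?_⟩
  intro q hq x hx
  have hqV : q ∈ V := (MvPolynomial.mem_restrictTotalDegree _ _ _).mpr hq
  set v := b.equivFun ⟨q, hqV⟩ with hv
  have hqv : ((ι v : V) : MvPolynomial (Fin d) ℝ) = q := by
    simp only [hv, ι, LinearEquiv.symm_apply_apply]
  have heq : ∀ y : Eucl d, eval (fun i => y i) q = H v y := by
    intro y
    rw [← hqv, hιeval]
  have hFq : F v = ∫ y in B₀, (eval (fun i => y i) q)^2 := by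
    simp only [hF]
    refine integral_congr_ae (Filter.Eventually.of_forall fun y => ?_)
    show H v y ^ 2 = (eval fun i => y i) q ^ 2
    rw [heq y]
  have h1 : |eval (fun i => x i) q| ≤ A * ‖v‖ := by
    rw [heq x]; exact hsup v x hx
  have h2 : ‖v‖ ≤ Real.sqrt (F v) / Real.sqrt m := by
    have hsq : ‖v‖^2 ≤ F v / m := (le_div_iff₀ hm).mpr (by linarith [hlow v])
    calc ‖v‖ = Real.sqrt (‖v‖^2) := (Real.sqrt_sq (norm_nonneg v)).symm
      _ ≤ Real.sqrt (F v / m) := Real.sqrt_le_sqrt hsq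
      _ = Real.sqrt (F v) / Real.sqrt m := Real.sqrt_div (hFnonneg v) m
  calc |eval (fun i => x i) q| ≤ A * ‖v‖ := h1
    _ ≤ A * (Real.sqrt (F v) / Real.sqrt m) :=
        mul_le_mul_of_nonneg_left h2 hApos.le
    _ = (A / Real.sqrt m) * Real.sqrt (F v) := by ring
    _ = (A / Real.sqrt m) * Real.sqrt (∫ y in B₀, (eval (fun i => y i) q)^2) := by
        rw [hFq]

theorem stmt0 (d l : ℕ) (ρ : ℝ) (hρ : 1 < ρ) :
    ∃ C > (0 : ℝ), ∀ q : MvPolynomial (Fin d) ℝ, q.totalDegree ≤ l →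
      ∀ (c : EuclideanSpace ℝ (Fin d)) (r : ℝ), (1 : ℝ)/ρ ≤ r →
        Metric.closedBall c r ⊆ Metric.closedBall (0 : EuclideanSpace ℝ (Fin d)) 1 →
        ∀ x ∈ Metric.closedBall (0 : EuclideanSpace ℝ (Fin d)) 1,
          |MvPolynomial.eval (fun i => x i) q| ≤
            C * (∫ y in Metric.closedBall c r,
              (MvPolynomial.eval (fun i => y i) q) ^ 2) ^ ((1 : ℝ)/2) := by
  classical
  have hρ0 : 0 < ρ := lt_trans one_pos hρ
  set r₀ : ℝ := 1/(2*ρ) with hr₀def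
  have hr₀ : 0 < r₀ := by positivity
  -- finite net for the closed unit ball of centers
  set K : Set (Eucl d) := closedBall (0 : Eucl d) 1 with hK
  have hKc : IsCompact K := isCompact_closedBall _ _
  have hcover : K ⊆ ⋃ c₀ ∈ K, ball c₀ r₀ := by
    intro c hc
    exact Set.mem_biUnion hc (mem_ball_self hr₀)
  obtain ⟨t, htK, htfin, htcover⟩ := hKc.elim_finite_subcover_image
    (fun c₀ _ => isOpen_ball) hcover
  -- constants per net point
  have hg : ∀ c₀ : Eucl d, ∃ C > (0:ℝ), ∀ q : MvPolynomial (Fin d) ℝ, q.totalDegree ≤ l →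
      ∀ x ∈ closedBall (0 : Eucl d) 1,
        |eval (fun i => x i) q| ≤
          C * Real.sqrt (∫ y in closedBall c₀ r₀, (eval (fun i => y i) q)^2) :=
    fun c₀ => perBall d l c₀ r₀ hr₀
  choose g hgpos hgbound using hg
  set C : ℝ := 1 + ∑ c₀ ∈ htfin.toFinset, g c₀ with hC
  have hCpos : 0 < C := by
    have : 0 ≤ ∑ c₀ ∈ htfin.toFinset, g c₀ :=
      Finset.sum_nonneg fun c₀ _ => (hgpos c₀).le
    linarith
  refine ⟨C, hCpos, ?_⟩
  intro q hq c r hr hsub x hx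
  -- c is in K
  have hcK : c ∈ K := by
    have hrpos : (0:ℝ) < r := lt_of_lt_of_le (by positivity) hr
    exact hsub (mem_closedBall_self hrpos.le)
  obtain ⟨c₀, hc₀t, hcball⟩ := Set.mem_iUnion₂.mp (htcover hcK)
  have hc₀fin : c₀ ∈ htfin.toFinset := htfin.mem_toFinset.mpr hc₀t
  -- inclusion of balls
  have hincl : closedBall c₀ r₀ ⊆ closedBall c r := by
    intro y hy
    rw [mem_closedBall] at hy ⊢
    have h1 : dist y c ≤ dist y c₀ + dist c₀ c := dist_triangle _ _ _
    have h2 : dist c₀ c < r₀ := by rw [dist_comm]; exact mem_ball.mp hcball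
    have : dist y c ≤ r₀ + r₀ := by linarith
    have hrr : r₀ + r₀ ≤ r := by
      rw [hr₀def]
      calc 1/(2*ρ) + 1/(2*ρ) = 1/ρ := by rw [← add_div]; rw [eq_div_iff hρ0.ne']; field_simp; norm_num
        _ ≤ r := hr
    linarith
  -- integral monotonicity
  set fq : Eucl d → ℝ := fun y => (eval (fun i => y i) q)^2 with hfq
  have hfqc : Continuous fq := (cont_eval d q).pow 2
  have hfqint : IntegrableOn fq (closedBall c r) :=
    hfqc.continuousOn.integrableOn_compact (isCompact_closedBall _ _)
  have hmono : (∫ y in closedBall c₀ r₀, fq y) ≤ ∫ y in closedBall c r, fq y := by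
    refine setIntegral_mono_set hfqint ?_ (HasSubset.Subset.eventuallyLE hincl)
    exact Filter.Eventually.of_forall fun y => sq_nonneg _
  have hI2 : (0:ℝ) ≤ ∫ y in closedBall c r, fq y :=
    setIntegral_nonneg measurableSet_closedBall fun y _ => sq_nonneg _
  -- conclude
  have hb := hgbound c₀ q hq x hx
  have hsqrt : Real.sqrt (∫ y in closedBall c₀ r₀, fq y) ≤
      Real.sqrt (∫ y in closedBall c r, fq y) := Real.sqrt_le_sqrt hmono
  have hgC : g c₀ ≤ C := by
    rw [hC]
    have : g c₀ ≤ ∑ c' ∈ htfin.toFinset, g c' :=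
      Finset.single_le_sum (fun c' _ => (hgpos c').le) hc₀fin
    linarith
  have hrpow : (∫ y in closedBall c r, fq y) ^ ((1:ℝ)/2) =
      Real.sqrt (∫ y in closedBall c r, fq y) := (Real.sqrt_eq_rpow _).symm
  calc |eval (fun i => x i) q|
      ≤ g c₀ * Real.sqrt (∫ y in closedBall c₀ r₀, fq y) := hb
    _ ≤ C * Real.sqrt (∫ y in closedBall c r, fq y) := by
        exact mul_le_mul hgC hsqrt (Real.sqrt_nonneg _) hCpos.le
    _ = C * (∫ y in closedBall c r, fq y) ^ ((1:ℝ)/2) := by rw [hrpow]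

end
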